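/- Let (X_i, Y_i, U_i), i = 1, ..., N+1, be an i.i.d. sequence taking values in 𝒳 × 𝒴 × [0,1], with 𝒴 finite. Let Ŷ(x, u, τ) be a set-valued predictor satisfying the nestedness property, assume there exists τ ∈ ℝ with Ŷ(x, u, τ) = 𝒴 for all x, u, and define the scores S_i = inf{ τ ∈ ℝ : Y_i ∈ Ŷ(X_i, U_i, τ) }. Assume the sets grow smoothly in τ in the sense that almost surely S_1, ..., S_{N+1} are pairwise distinct and Y_i ∈ Ŷ(X_i, U_i, S_i) for each i. Define τ* = inf{ τ ∈ ℝ : |{ i ≤ N : Y_i ∈ Ŷ(X_i, U_i, τ) }| ≥ ⌈(1−α)(N+1)⌉ }. Then for any α ∈ (0,1), P[ Y_{N+1} ∈ Ŷ(X_{N+1}, U_{N+1}, τ*) ] ≤ 1 − α + 1/(N+1). -/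

import Mathlib

open MeasureTheory Classical

/-- **Marginal validity (upper bound) of nested conformal prediction.**
Let `(Xᵢ, Yᵢ, Uᵢ)`, `i = 1, …, N+1`, be an i.i.d. sequence with values in
`𝒳 × 𝒴 × [0,1]`, `𝒴` finite.  Let `Ŷ(x, u, τ)` be a nested set-valued predictor that
equals `𝒴` for some `τ`, with scores `Sᵢ = inf {τ : Yᵢ ∈ Ŷ(Xᵢ, Uᵢ, τ)}`.  If the sets
grow smoothly in `τ` (a.s. the scores are pairwise distinct and attained), then with
`τ* = inf {τ : |{i ≤ N : Yᵢ ∈ Ŷ(Xᵢ, Uᵢ, τ)}| ≥ ⌈(1-α)(N+1)⌉}`, one has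
`P[Y_{N+1} ∈ Ŷ(X_{N+1}, U_{N+1}, τ*)] ≤ 1 - α + 1/(N+1)`. -/
theorem marginal_validity_nested_conformal_upper
    {Ω : Type*} [MeasurableSpace Ω] (ℙ : Measure Ω) [IsProbabilityMeasure ℙ]
    {𝒳 : Type*} [MeasurableSpace 𝒳]
    {𝒴 : Type*} [Fintype 𝒴] [Nonempty 𝒴] [MeasurableSpace 𝒴] [MeasurableSingletonClass 𝒴]
    (N : ℕ)
    -- the i.i.d. sequence (Xᵢ, Yᵢ, Uᵢ), i = 0, …, N (N+1 samples)
    (Z : Fin (N + 1) → Ω → 𝒳 × 𝒴 × ℝ)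
    (hZmeas : ∀ i, Measurable (Z i))
    (hU : ∀ i ω, (Z i ω).2.2 ∈ Set.Icc (0 : ℝ) 1)
    (hindep : ProbabilityTheory.iIndepFun Z ℙ)
    (hident : ∀ i j, ProbabilityTheory.IdentDistrib (Z i) (Z j) ℙ ℙ)
    -- the set-valued predictor
    (Yhat : 𝒳 → ℝ → ℝ → Set 𝒴)
    (hYmeas : ∀ (y : 𝒴) (τ : ℝ), MeasurableSet {q : 𝒳 × ℝ | y ∈ Yhat q.1 q.2 τ})
    (hnested : ∀ (x : 𝒳) (u : ℝ) (τ₁ τ₂ : ℝ), τ₁ ≤ τ₂ → Yhat x u τ₁ ⊆ Yhat x u τ₂)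
    (hfull : ∃ τ : ℝ, ∀ (x : 𝒳) (u : ℝ), Yhat x u τ = Set.univ)
    -- the nonconformity scores Sᵢ = inf {τ : Yᵢ ∈ Ŷ(Xᵢ, Uᵢ, τ)}
    (S : Fin (N + 1) → Ω → ℝ)
    (hS : ∀ i ω, S i ω = sInf {τ : ℝ | (Z i ω).2.1 ∈ Yhat (Z i ω).1 (Z i ω).2.2 τ})
    -- the sets grow smoothly in τ: a.s. scores are pairwise distinct and attained
    (hsmooth : ∀ᵐ ω ∂ℙ, (∀ i j : Fin (N + 1), i ≠ j → S i ω ≠ S j ω) ∧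
      ∀ i : Fin (N + 1), (Z i ω).2.1 ∈ Yhat (Z i ω).1 (Z i ω).2.2 (S i ω))
    -- the miscoverage level
    (α : ℝ) (hα : α ∈ Set.Ioo (0 : ℝ) 1)
    -- the calibrated threshold τ*
    (τstar : Ω → ℝ)
    (hτstar : ∀ ω, τstar ω = sInf {τ : ℝ |
      (⌈(1 - α) * (N + 1)⌉ : ℤ) ≤
        ((Finset.univ.filter (fun i : Fin N =>
          (Z i.castSucc ω).2.1 ∈
            Yhat (Z i.castSucc ω).1 (Z i.castSucc ω).2.2 τ)).card : ℤ)}) :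
    (ℙ {ω | (Z (Fin.last N) ω).2.1 ∈
        Yhat (Z (Fin.last N) ω).1 (Z (Fin.last N) ω).2.2 (τstar ω)}).toReal ≤
      1 - α + 1 / (N + 1) := by
  classical
  obtain ⟨hα0, hα1⟩ := hα
  have hN1R : (0:ℝ) < (N:ℝ) + 1 := by positivity
  -- trivial case: α ≤ 1/(N+1)
  rcases le_or_gt α (1 / ((N:ℝ) + 1)) with htriv | hαbig
  · have h1 : (ℙ {ω | (Z (Fin.last N) ω).2.1 ∈
        Yhat (Z (Fin.last N) ω).1 (Z (Fin.last N) ω).2.2 (τstar ω)}).toReal ≤ 1 := by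
      have h2 := prob_le_one (μ := ℙ) (s := {ω | (Z (Fin.last N) ω).2.1 ∈
        Yhat (Z (Fin.last N) ω).1 (Z (Fin.last N) ω).2.2 (τstar ω)})
      have := ENNReal.toReal_mono (by simp) h2
      simpa using this
    have : (1:ℝ) ≤ 1 - α + 1 / ((N:ℝ) + 1) := by linarith
    exact h1.trans this
  -- main case
  set k : ℤ := ⌈(1 - α) * ((N:ℝ) + 1)⌉ with hkdef
  have hk0 : 0 < k := Int.ceil_pos.2 (by nlinarith)
  have hkN : k ≤ (N:ℤ) := by
    apply Int.ceil_le.2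
    push_cast
    nlinarith [(div_lt_iff₀ hN1R).mp hαbig]
  have hN1 : 1 ≤ N := by
    have : (0:ℤ) < (N:ℤ) := lt_of_lt_of_le hk0 hkN
    exact_mod_cast this
  have hkleR : (k:ℝ) ≤ (N:ℝ) := by exact_mod_cast hkN
  -- the membership sets
  set C : ℝ → Set (𝒳 × 𝒴 × ℝ) := fun τ => {z | z.2.1 ∈ Yhat z.1 z.2.2 τ} with hCdef
  have hCmeas : ∀ τ, MeasurableSet (C τ) := by
    intro τ
    have hrw : C τ = ⋃ y : 𝒴, ((fun z : 𝒳 × 𝒴 × ℝ => z.2.1) ⁻¹' {y}) ∩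
        ((fun z : 𝒳 × 𝒴 × ℝ => (z.1, z.2.2)) ⁻¹' {q : 𝒳 × ℝ | y ∈ Yhat q.1 q.2 τ}) := by
      ext z
      simp only [hCdef, Set.mem_setOf_eq, Set.mem_iUnion, Set.mem_inter_iff, Set.mem_preimage,
        Set.mem_singleton_iff]
      constructor
      · intro h; exact ⟨z.2.1, rfl, h⟩
      · rintro ⟨y, hy, h⟩; rw [hy]; exact h
    rw [hrw]
    refine MeasurableSet.iUnion fun y => MeasurableSet.inter ?_ ?_
    · exact (measurable_fst.comp measurable_snd) (measurableSet_singleton y)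
    · exact (measurable_fst.prodMk (measurable_snd.comp measurable_snd)) (hYmeas y τ)
  have hCup : ∀ (z : 𝒳 × 𝒴 × ℝ) (τ₁ τ₂ : ℝ), τ₁ ≤ τ₂ → z ∈ C τ₁ → z ∈ C τ₂ :=
    fun z τ₁ τ₂ h hz => hnested z.1 z.2.2 τ₁ τ₂ h hz
  obtain ⟨τfull, hτfull⟩ := hfull
  have hCfull : ∀ z : 𝒳 × 𝒴 × ℝ, z ∈ C τfull := fun z => by
    simp [hCdef, hτfull]
  set B : (𝒳 × 𝒴 × ℝ) → Set ℝ := fun z => {τ | z ∈ C τ} with hBdef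
  have hBne : ∀ z, (B z).Nonempty := fun z => ⟨τfull, hCfull z⟩
  set s : (𝒳 × 𝒴 × ℝ) → ℝ := fun z => sInf (B z) with hsdef
  have hSs : ∀ i ω, S i ω = s (Z i ω) := fun i ω => hS i ω
  -- the pathological (unbounded-below) set
  set Pbad : Set (𝒳 × 𝒴 × ℝ) := {z | ¬ BddBelow (B z)} with hPdef
  have hPiff : ∀ z, z ∈ Pbad ↔ ∀ n : ℕ, z ∈ C (-(n:ℝ)) := by
    intro z
    constructor
    · intro h n
      obtain ⟨y, hyB, hylt⟩ := (not_bddBelow_iff.mp h) (-(n:ℝ))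
      exact hCup z y _ hylt.le hyB
    · intro h hbdd
      obtain ⟨b, hb⟩ := hbdd
      obtain ⟨n, hn⟩ := exists_nat_gt (-b)
      have h1 : b ≤ -(n:ℝ) := hb (h n)
      linarith
  have hPmeas : MeasurableSet Pbad := by
    have : Pbad = ⋂ n : ℕ, C (-(n:ℝ)) := by
      ext z; simpa using hPiff z
    rw [this]
    exact MeasurableSet.iInter fun n => hCmeas _
  -- measurability of the score function
  have hsmeas : Measurable s := by
    apply measurable_of_Iic
    intro t
    have hrw : s ⁻¹' Set.Iic t =
        ((⋂ (q : ℚ) (_ : t < (q:ℝ)), C (q:ℝ)) \ Pbad) ∪ (if (0:ℝ) ≤ t then Pbad else ∅) := by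
      ext z
      simp only [Set.mem_preimage, Set.mem_Iic, Set.mem_union, Set.mem_diff, Set.mem_iInter]
      by_cases hp : z ∈ Pbad
      · have hs0 : s z = 0 := Real.sInf_of_not_bddBelow hp
        constructor
        · intro h
          right
          rw [if_pos (by rw [← hs0]; exact h)]
          exact hp
        · rintro (⟨_, hnp⟩ | h)
          · exact absurd hp hnp
          · split_ifs at h with h0
            · rw [hs0]; exact h0
            · exact h.elim
      · have hbdd : BddBelow (B z) := not_not.mp hp
        constructor
        · intro h
          left
          refine ⟨fun q hq => ?_, hp⟩
          obtain ⟨τ, hτB, hτlt⟩ := exists_lt_of_csInf_lt (hBne z) (lt_of_le_of_lt h hq)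
          exact hCup z τ q hτlt.le hτB
        · rintro (⟨hq, _⟩ | h)
          · by_contra hlt
            push_neg at hlt
            obtain ⟨q, hq1, hq2⟩ := exists_rat_btwn hlt
            exact absurd (csInf_le hbdd (hq q hq1)) (not_le.mpr hq2)
          · split_ifs at h with h0
            · exact absurd h hp
            · exact h.elim
    rw [hrw]
    refine MeasurableSet.union ?_ ?_
    · exact (MeasurableSet.iInter fun q => MeasurableSet.iInter fun _ => hCmeas _).diff hPmeas
    · split_ifs
      · exact hPmeas
      · exact MeasurableSet.empty
  -- path space
  set π : Ω → (Fin (N+1) → 𝒳 × 𝒴 × ℝ) := fun ω i => Z i ω with hπdef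
  have hπmeas : Measurable π := measurable_pi_lambda _ hZmeas
  set ν : Measure (𝒳 × 𝒴 × ℝ) := ℙ.map (Z (Fin.last N)) with hνdef
  haveI : IsProbabilityMeasure ν := Measure.isProbabilityMeasure_map (hZmeas _).aemeasurable
  set μpi : Measure (Fin (N+1) → 𝒳 × 𝒴 × ℝ) := Measure.pi (fun _ => ν) with hμdef
  have hmapν : ∀ i (T : Set (𝒳 × 𝒴 × ℝ)), MeasurableSet T → ℙ (Z i ⁻¹' T) = ν T := by
    intro i T hT
    rw [hνdef, ← (hident i (Fin.last N)).map_eq, Measure.map_apply (hZmeas i) hT]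
  have hlaw : ℙ.map π = μpi := by
    rw [hμdef]
    refine (Measure.pi_eq fun sets hsets => ?_).symm
    rw [Measure.map_apply hπmeas (MeasurableSet.univ_pi hsets)]
    have hpre : π ⁻¹' Set.pi Set.univ sets = ⋂ i, Z i ⁻¹' sets i := by
      ext ω
      simp [hπdef, Set.mem_pi]
    rw [hpre, hindep.meas_iInter (s := fun i => Z i ⁻¹' sets i)
      (fun i => ⟨sets i, hsets i, rfl⟩)]
    exact Finset.prod_congr rfl fun i _ => hmapν i _ (hsets i)
  -- rank events
  set g : Fin (N+1) → (Fin (N+1) → 𝒳 × 𝒴 × ℝ) → ℝ :=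
    fun j f => ∑ i : Fin (N+1), if s (f i) ≤ s (f j) then (1:ℝ) else 0 with hgdef
  have hgmeas : ∀ j, Measurable (g j) := by
    intro j
    apply Finset.measurable_sum
    intro i _
    exact Measurable.ite (measurableSet_le (hsmeas.comp (measurable_pi_apply i))
      (hsmeas.comp (measurable_pi_apply j))) measurable_const measurable_const
  set R : Fin (N+1) → Set (Fin (N+1) → 𝒳 × 𝒴 × ℝ) := fun j => g j ⁻¹' Set.Iic (k:ℝ) with hRdef
  have hRmeas : ∀ j, MeasurableSet (R j) := fun j => (hgmeas j) measurableSet_Iic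
  set A : Fin (N+1) → Set Ω := fun j => π ⁻¹' R j with hAdef
  have hAmeas : ∀ j, MeasurableSet (A j) := fun j => hπmeas (hRmeas j)
  have hAP : ∀ j, ℙ (A j) = μpi (R j) := by
    intro j
    rw [← hlaw, Measure.map_apply hπmeas (hRmeas j)]
  -- exchangeability: all rank events have the same probability
  have hRswap : ∀ j, μpi (R j) = μpi (R (Fin.last N)) := by
    intro j
    set e : Fin (N+1) ≃ Fin (N+1) := Equiv.swap j (Fin.last N) with hedef
    have hTmeas : Measurable (fun f : Fin (N+1) → 𝒳 × 𝒴 × ℝ => f ∘ e) :=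
      measurable_pi_lambda _ fun i => measurable_pi_apply (e i)
    have hinv : μpi.map (fun f => f ∘ e) = μpi := by
      rw [hμdef]
      refine (Measure.pi_eq fun sets hsets => ?_).symm
      rw [Measure.map_apply hTmeas (MeasurableSet.univ_pi hsets)]
      have hpre : (fun f : Fin (N+1) → 𝒳 × 𝒴 × ℝ => f ∘ e) ⁻¹' Set.pi Set.univ sets
          = Set.pi Set.univ (fun i => sets (e.symm i)) := by
        ext f
        simp only [Set.mem_preimage, Set.mem_pi, Set.mem_univ, forall_true_left,
          Function.comp_apply, true_implies]
        constructor
        · intro h i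
          have := h (e.symm i)
          rwa [Equiv.apply_symm_apply] at this
        · intro h i
          have := h (e i)
          rwa [Equiv.symm_apply_apply] at this
      rw [hpre, Measure.pi_pi]
      exact Equiv.prod_comp e.symm (fun i => ν (sets i))
    have hpre2 : (fun f : Fin (N+1) → 𝒳 × 𝒴 × ℝ => f ∘ e) ⁻¹' R (Fin.last N) = R j := by
      ext f
      simp only [hRdef, Set.mem_preimage, Set.mem_Iic, hgdef, Function.comp_apply]
      have h1 : e (Fin.last N) = j := Equiv.swap_apply_right j (Fin.last N)
      simp only [h1]
      have hsum2 : (∑ i : Fin (N+1), if s (f (e i)) ≤ s (f j) then (1:ℝ) else 0)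
          = ∑ i : Fin (N+1), if s (f i) ≤ s (f j) then (1:ℝ) else 0 :=
        Fintype.sum_equiv e _ _ (fun i => rfl)
      rw [hsum2]
    calc μpi (R j) = μpi ((fun f => f ∘ e) ⁻¹' R (Fin.last N)) := by rw [hpre2]
      _ = (μpi.map (fun f => f ∘ e)) (R (Fin.last N)) :=
          (Measure.map_apply hTmeas (hRmeas _)).symm
      _ = μpi (R (Fin.last N)) := by rw [hinv]
  -- distinctness a.e.
  have hdistinctnull : ℙ {ω | ¬ (∀ i j : Fin (N+1), i ≠ j → S i ω ≠ S j ω)} = 0 :=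
    ae_iff.mp (hsmooth.mono fun ω h => h.1)
  -- pathological set has probability zero
  have hpathnull : ∀ i, ℙ (Z i ⁻¹' Pbad) = 0 := by
    have h0ne : (⟨0, Nat.succ_pos N⟩ : Fin (N+1)) ≠ Fin.last N := by
      intro h
      have := congrArg Fin.val h
      simp [Fin.last] at this
      omega
    set i0 : Fin (N+1) := ⟨0, Nat.succ_pos N⟩ with hi0def
    have hindep2 : ProbabilityTheory.IndepFun (Z i0) (Z (Fin.last N)) ℙ :=
      hindep.indepFun h0ne
    have hmul : ℙ (Z i0 ⁻¹' Pbad ∩ Z (Fin.last N) ⁻¹' Pbad)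
        = ℙ (Z i0 ⁻¹' Pbad) * ℙ (Z (Fin.last N) ⁻¹' Pbad) :=
      hindep2.measure_inter_preimage_eq_mul Pbad Pbad hPmeas hPmeas
    have hsub : Z i0 ⁻¹' Pbad ∩ Z (Fin.last N) ⁻¹' Pbad ⊆
        {ω | ¬ (∀ i j : Fin (N+1), i ≠ j → S i ω ≠ S j ω)} := by
      rintro ω ⟨h1, h2⟩
      intro hdist
      have e1 : S i0 ω = 0 := by rw [hSs]; exact Real.sInf_of_not_bddBelow h1
      have e2 : S (Fin.last N) ω = 0 := by rw [hSs]; exact Real.sInf_of_not_bddBelow h2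
      exact hdist i0 (Fin.last N) h0ne (e1.trans e2.symm)
    have h00 : ℙ (Z i0 ⁻¹' Pbad) * ℙ (Z (Fin.last N) ⁻¹' Pbad) = 0 := by
      rw [← hmul]
      exact measure_mono_null hsub hdistinctnull
    have heq : ℙ (Z i0 ⁻¹' Pbad) = ℙ (Z (Fin.last N) ⁻¹' Pbad) := by
      rw [hmapν i0 _ hPmeas, hmapν (Fin.last N) _ hPmeas]
    rw [heq] at h00
    have hlast0 : ℙ (Z (Fin.last N) ⁻¹' Pbad) = 0 := by
      exact mul_self_eq_zero.mp h00
    intro i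
    rw [hmapν i _ hPmeas, ← hmapν (Fin.last N) _ hPmeas]
    exact hlast0
  -- the good event
  set Good : Ω → Prop := fun ω => (∀ i j : Fin (N+1), i ≠ j → S i ω ≠ S j ω) ∧
      (∀ i : Fin (N+1), (Z i ω).2.1 ∈ Yhat (Z i ω).1 (Z i ω).2.2 (S i ω)) ∧
      (∀ i : Fin (N+1), BddBelow (B (Z i ω))) with hGdef
  have hgood : ∀ᵐ ω ∂ℙ, Good ω := by
    have hpath : ∀ᵐ ω ∂ℙ, ∀ i, Z i ω ∉ Pbad := by
      rw [ae_all_iff]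
      intro i
      rw [ae_iff]
      simp only [not_not]; exact hpathnull i
    filter_upwards [hsmooth, hpath] with ω h1 h2
    exact ⟨h1.1, h1.2, fun i => not_not.mp (h2 i)⟩
  -- key pointwise equivalence on the good event
  have key1 : ∀ ω, Good ω → ∀ (i : Fin (N+1)) (τ : ℝ), (Z i ω ∈ C τ ↔ S i ω ≤ τ) := by
    intro ω hg i τ
    obtain ⟨hdist, hatt, hbdd⟩ := hg
    constructor
    · intro h
      rw [hSs]
      exact csInf_le (hbdd i) h
    · intro h
      have hmem : S i ω ∈ B (Z i ω) := hatt i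
      exact hCup _ _ _ h hmem
  -- the rank: on good events, membership in A j is a rank condition
  have hgω : ∀ ω (j : Fin (N+1)), g j (π ω)
      = ((Finset.univ.filter fun i : Fin (N+1) => S i ω ≤ S j ω).card : ℝ) := by
    intro ω j
    rw [hgdef]
    have : ∀ i : Fin (N+1), s (π ω i) = S i ω := fun i => (hSs i ω).symm
    simp only [this]
    rw [Finset.sum_boole]
  have hAiff : ∀ ω (j : Fin (N+1)), ω ∈ A j ↔
      ((Finset.univ.filter fun i : Fin (N+1) => S i ω ≤ S j ω).card : ℤ) ≤ k := by
    intro ω j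
    have : ω ∈ A j ↔ g j (π ω) ≤ (k:ℝ) := Iff.rfl
    rw [this, hgω ω j]
    constructor
    · intro h; exact_mod_cast h
    · intro h; exact_mod_cast h
  -- coverage implies membership in A last, on the good event
  have key2 : ∀ ω, Good ω →
      (Z (Fin.last N) ω).2.1 ∈ Yhat (Z (Fin.last N) ω).1 (Z (Fin.last N) ω).2.2 (τstar ω) →
      ω ∈ A (Fin.last N) := by
    intro ω hg hcov
    obtain ⟨hdist, hatt, hbdd⟩ := hg
    have hcov' : Z (Fin.last N) ω ∈ C (τstar ω) := hcov
    have hSle : S (Fin.last N) ω ≤ τstar ω := (key1 ω ⟨hdist, hatt, hbdd⟩ _ _).mp hcov'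
    refine (hAiff ω (Fin.last N)).mpr ?_
    by_contra hgt
    push_neg at hgt
    set Fset : Finset (Fin (N+1)) :=
      Finset.univ.filter (fun i : Fin (N+1) => S i ω ≤ S (Fin.last N) ω) with hFdef
    have hcard : k < (Fset.card : ℤ) := hgt
    have hlastmem : Fin.last N ∈ Fset := by
      rw [hFdef]; simp
    set F' : Finset (Fin (N+1)) := Fset.erase (Fin.last N) with hF'def
    have hcard' : k ≤ (F'.card : ℤ) := by
      rw [hF'def, Finset.card_erase_of_mem hlastmem]
      omega
    have hne : F'.Nonempty := by
      rw [← Finset.card_pos]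
      omega
    set m : ℝ := F'.sup' hne (fun i => S i ω) with hmdef
    have hup : ∀ i ∈ F', S i ω ≤ m := fun i hi => Finset.le_sup' (f := fun i => S i ω) hi
    obtain ⟨i₀, hi₀F, hi₀⟩ := Finset.exists_mem_eq_sup' hne (fun i => S i ω)
    have hmlt : m < S (Fin.last N) ω := by
      have h1 : S i₀ ω ≤ S (Fin.last N) ω := by
        have := Finset.mem_of_mem_erase hi₀F
        rw [hFdef, Finset.mem_filter] at this
        exact this.2
      have h2 : i₀ ≠ Fin.last N := Finset.ne_of_mem_erase hi₀F
      rw [hmdef, hi₀]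
      exact lt_of_le_of_ne h1 (hdist _ _ h2)
    -- the threshold set
    set Tset : Set ℝ := {τ : ℝ |
      (k : ℤ) ≤
        ((Finset.univ.filter (fun i : Fin N =>
          (Z i.castSucc ω).2.1 ∈
            Yhat (Z i.castSucc ω).1 (Z i.castSucc ω).2.2 τ)).card : ℤ)} with hTdef
    have hTcount : ∀ τ : ℝ, (Finset.univ.filter (fun i : Fin N =>
        (Z i.castSucc ω).2.1 ∈ Yhat (Z i.castSucc ω).1 (Z i.castSucc ω).2.2 τ))
        = (Finset.univ.filter (fun i : Fin N => S i.castSucc ω ≤ τ)) := by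
      intro τ
      apply Finset.filter_congr
      intro i _
      exact key1 ω ⟨hdist, hatt, hbdd⟩ i.castSucc τ
    have hmT : m ∈ Tset := by
      rw [hTdef, Set.mem_setOf_eq, hTcount m]
      have hsubim : F' ⊆ (Finset.univ.filter (fun i : Fin N => S i.castSucc ω ≤ m)).image
          Fin.castSucc := by
        intro i hi
        have hine : i ≠ Fin.last N := Finset.ne_of_mem_erase hi
        obtain ⟨j, hj⟩ := Fin.exists_castSucc_eq.mpr hine
        rw [Finset.mem_image]
        refine ⟨j, ?_, hj⟩
        rw [Finset.mem_filter]
        exact ⟨Finset.mem_univ j, by rw [hj]; exact hup i hi⟩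
      have hcardle : F'.card ≤
          (Finset.univ.filter (fun i : Fin N => S i.castSucc ω ≤ m)).card := by
        calc F'.card ≤ ((Finset.univ.filter (fun i : Fin N => S i.castSucc ω ≤ m)).image
            Fin.castSucc).card := Finset.card_le_card hsubim
          _ ≤ _ := Finset.card_image_le
      have h1 : (F'.card : ℤ) ≤
          ((Finset.univ.filter (fun i : Fin N => S i.castSucc ω ≤ m)).card : ℤ) := by
        exact_mod_cast hcardle
      omega
    have hTbdd : BddBelow Tset := by
      have hFinN : (Finset.univ : Finset (Fin N)).Nonempty := by
        refine ⟨⟨0, ?_⟩, Finset.mem_univ _⟩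
        omega
      set bmin : ℝ := Finset.min' ((Finset.univ : Finset (Fin N)).image
        (fun i : Fin N => S i.castSucc ω)) (hFinN.image _) with hbdef
      refine ⟨bmin, fun τ hτ => ?_⟩
      rw [hTdef, Set.mem_setOf_eq, hTcount τ] at hτ
      have hpos : 0 < (Finset.univ.filter (fun i : Fin N => S i.castSucc ω ≤ τ)).card := by
        omega
      obtain ⟨i, hi⟩ := Finset.card_pos.mp hpos
      rw [Finset.mem_filter] at hi
      calc bmin ≤ S i.castSucc ω := Finset.min'_le _ _ (Finset.mem_image_of_mem _
        (Finset.mem_univ i))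
        _ ≤ τ := hi.2
    have hτm : τstar ω ≤ m := by
      rw [hτstar ω]
      exact csInf_le hTbdd hmT
    linarith
  -- counting: at most k indices j have ω ∈ A j, for good ω
  have key3 : ∀ ω, Good ω →
      (Finset.univ.filter fun j : Fin (N+1) => ω ∈ A j).card ≤ k.toNat := by
    intro ω hg
    obtain ⟨hdist, hatt, hbdd⟩ := hg
    set rk : Fin (N+1) → ℕ :=
      fun j => (Finset.univ.filter fun i : Fin (N+1) => S i ω ≤ S j ω).card with hrkdef
    have hrk1 : ∀ j, 1 ≤ rk j := by
      intro j
      rw [hrkdef]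
      refine Finset.card_pos.mpr ⟨j, ?_⟩
      simp
    have hrkinj : ∀ j j', rk j = rk j' → j = j' := by
      intro j j' h
      by_contra hne
      have hwlog : ∀ a b : Fin (N+1), S a ω < S b ω → rk a < rk b := by
        intro a b hab
        rw [hrkdef]
        apply Finset.card_lt_card
        constructor
        · intro i hi
          rw [Finset.mem_filter] at hi ⊢
          exact ⟨hi.1, hi.2.trans hab.le⟩
        · intro hsub
          have hb : b ∈ Finset.univ.filter fun i : Fin (N+1) => S i ω ≤ S b ω := by
            simp
          have := hsub hb
          rw [Finset.mem_filter] at this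
          linarith [this.2]
      rcases lt_trichotomy (S j ω) (S j' ω) with hlt | heq | hlt
      · exact absurd h (hwlog j j' hlt).ne
      · exact hdist j j' hne heq
      · exact absurd h.symm (hwlog j' j hlt).ne
    have hmaps : ∀ j ∈ (Finset.univ.filter fun j : Fin (N+1) => ω ∈ A j),
        rk j ∈ Finset.Icc 1 k.toNat := by
      intro j hj
      rw [Finset.mem_filter] at hj
      have := (hAiff ω j).mp hj.2
      rw [Finset.mem_Icc]
      refine ⟨hrk1 j, ?_⟩
      simp only [hrkdef]
      omega
    have hfin : (Finset.univ.filter fun j : Fin (N+1) => ω ∈ A j).card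
        ≤ (Finset.Icc 1 k.toNat).card :=
      Finset.card_le_card_of_injOn rk hmaps (fun a _ b _ hab => hrkinj a b hab)
    simpa [Nat.card_Icc] using hfin
  -- summation bound
  have hsum : ∑ j : Fin (N+1), ℙ (A j) ≤ (k.toNat : ENNReal) := by
    have h1 : ∀ j, ℙ (A j) = ∫⁻ ω, (A j).indicator (fun _ => (1:ENNReal)) ω ∂ℙ := by
      intro j
      rw [lintegral_indicator (hAmeas j)]
      simp
    calc ∑ j : Fin (N+1), ℙ (A j)
        = ∑ j : Fin (N+1), ∫⁻ ω, (A j).indicator (fun _ => (1:ENNReal)) ω ∂ℙ :=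
          Finset.sum_congr rfl fun j _ => h1 j
      _ = ∫⁻ ω, ∑ j : Fin (N+1), (A j).indicator (fun _ => (1:ENNReal)) ω ∂ℙ :=
          (lintegral_finset_sum _ (fun j _ => measurable_one.indicator (hAmeas j))).symm
      _ ≤ (∫⁻ (_ : Ω), (k.toNat : ENNReal) ∂ℙ) := by
          apply lintegral_mono_ae
          filter_upwards [hgood] with ω hg
          have hcnt : ∑ j : Fin (N+1), (A j).indicator (fun _ => (1:ENNReal)) ω
              = ((Finset.univ.filter fun j : Fin (N+1) => ω ∈ A j).card : ENNReal) := by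
            rw [← Finset.sum_boole]
            exact Finset.sum_congr rfl fun j _ => by
              rw [Set.indicator_apply]
          rw [hcnt]
          exact_mod_cast Nat.cast_le.mpr (key3 ω hg)
      _ = (k.toNat : ENNReal) := by
          rw [lintegral_const, measure_univ, mul_one]
  -- conclude the main bound in ENNReal
  have hall : ∀ j, ℙ (A j) = ℙ (A (Fin.last N)) := by
    intro j
    rw [hAP j, hAP (Fin.last N), hRswap j]
  have hsumconst : ∑ j : Fin (N+1), ℙ (A j) = (N+1 : ℕ) * ℙ (A (Fin.last N)) := by
    rw [Finset.sum_congr rfl fun j _ => hall j, Finset.sum_const, Finset.card_univ,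
      Fintype.card_fin, nsmul_eq_mul]
  have hmain : ℙ (A (Fin.last N)) ≤ (k.toNat : ENNReal) / ((N+1 : ℕ) : ENNReal) := by
    rw [ENNReal.le_div_iff_mul_le (Or.inl (by simp)) (Or.inl (by simp))]
    rw [mul_comm, ← hsumconst]
    exact hsum
  -- coverage bound in ENNReal
  have hbadnull : ℙ {ω | ¬ Good ω} = 0 := ae_iff.mp hgood
  have hcovsub : {ω | (Z (Fin.last N) ω).2.1 ∈
      Yhat (Z (Fin.last N) ω).1 (Z (Fin.last N) ω).2.2 (τstar ω)} ⊆
      A (Fin.last N) ∪ {ω | ¬ Good ω} := by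
    intro ω hω
    by_cases hg : Good ω
    · exact Or.inl (key2 ω hg hω)
    · exact Or.inr hg
  have hcovbound : ℙ {ω | (Z (Fin.last N) ω).2.1 ∈
      Yhat (Z (Fin.last N) ω).1 (Z (Fin.last N) ω).2.2 (τstar ω)} ≤
      (k.toNat : ENNReal) / ((N+1 : ℕ) : ENNReal) := by
    calc ℙ {ω | (Z (Fin.last N) ω).2.1 ∈
        Yhat (Z (Fin.last N) ω).1 (Z (Fin.last N) ω).2.2 (τstar ω)}
        ≤ ℙ (A (Fin.last N) ∪ {ω | ¬ Good ω}) := measure_mono hcovsub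
      _ ≤ ℙ (A (Fin.last N)) + ℙ {ω | ¬ Good ω} := measure_union_le _ _
      _ = ℙ (A (Fin.last N)) := by rw [hbadnull, add_zero]
      _ ≤ _ := hmain
  -- pass to toReal
  have hRHSne : (k.toNat : ENNReal) / ((N+1 : ℕ) : ENNReal) ≠ ⊤ :=
    (ENNReal.div_lt_top (by simp) (by simp)).ne
  have htoReal := ENNReal.toReal_mono hRHSne hcovbound
  have hcomp : ((k.toNat : ENNReal) / ((N+1 : ℕ) : ENNReal)).toReal
      = (k.toNat : ℝ) / ((N:ℝ) + 1) := by
    rw [ENNReal.toReal_div]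
    simp only [ENNReal.toReal_natCast]
    push_cast
    ring
  rw [hcomp] at htoReal
  refine htoReal.trans ?_
  have hkreal : (k.toNat : ℝ) = (k:ℝ) := by
    exact_mod_cast Int.toNat_of_nonneg hk0.le
  rw [hkreal]
  have hceil : (k:ℝ) < (1-α) * ((N:ℝ)+1) + 1 := by
    rw [hkdef]
    exact Int.ceil_lt_add_one _
  have hstep : (k:ℝ) / ((N:ℝ)+1) ≤ ((1-α) * ((N:ℝ)+1) + 1) / ((N:ℝ)+1) := by
    gcongr

  refine hstep.trans ?_
  have heq2 : ((1-α) * ((N:ℝ)+1) + 1) / ((N:ℝ)+1) = 1 - α + 1/((N:ℝ)+1) := by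
    field_simp
  rw [heq2]
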